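/- For every α > 0, the second partial derivative of B with respect to η at η = 0 equals B_ηη(0, α) = (16/(15α))(α − 15/2). In particular B_ηη(0, α) > 0 for α > 7.5, B_ηη(0, α) = 0 for α = 7.5, and B_ηη(0, α) < 0 for 0 < α < 7.5. -/

import Mathlib

open Real MeasureTheory Set Filter intervalIntegral

/-- `A k η = ∫_0^1 z^k e^{-η z²} dz`. -/
noncomputable def A (k : ℕ) (η : ℝ) : ℝ :=
  ∫ z in (0:ℝ)..1, z ^ k * Real.exp (-η * z ^ 2)

lemma contA (k : ℕ) (x : ℝ) : Continuous (fun z : ℝ => z ^ k * Real.exp (-x * z ^ 2)) := by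
  continuity

lemma hasDerivAt_A (k : ℕ) (η₀ : ℝ) : HasDerivAt (A k) (-(A (k + 2) η₀)) η₀ := by
  have key := intervalIntegral.hasDerivAt_integral_of_dominated_loc_of_deriv_le
    (F := fun x t => t ^ k * Real.exp (-x * t ^ 2))
    (F' := fun x t => -(t ^ (k + 2) * Real.exp (-x * t ^ 2)))
    (x₀ := η₀) (a := 0) (b := 1) (bound := fun _ => Real.exp (|η₀| + 1))
    (μ := volume) (Metric.ball_mem_nhds η₀ one_pos)
    (Filter.Eventually.of_forall fun x => (contA k x).aestronglyMeasurable)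
    ((contA k η₀).intervalIntegrable 0 1)
    (((contA (k+2) η₀).neg).aestronglyMeasurable)
    ?_ (by apply Continuous.intervalIntegrable; continuity) ?_
  · have : (∫ t in (0:ℝ)..1, -(t ^ (k + 2) * Real.exp (-η₀ * t ^ 2))) = -(A (k+2) η₀) := by
      rw [intervalIntegral.integral_neg]; rfl
    rw [this] at key
    exact key.2
  · refine Filter.Eventually.of_forall fun t ht x hx => ?_
    rw [Set.mem_uIoc] at ht
    have ht' : t ∈ Set.Ioc (0:ℝ) 1 := by
      rcases ht with h | h
      · exact h
      · exact absurd (h.1.trans_le h.2) (by norm_num)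
    have h1 : |t| ≤ 1 := by rw [abs_le]; constructor <;> nlinarith [ht'.1, ht'.2]
    have h2 : t ^ (k+2) ≤ 1 := by
      calc t ^ (k+2) ≤ |t ^ (k+2)| := le_abs_self _
        _ = |t| ^ (k+2) := abs_pow t _
        _ ≤ 1 := pow_le_one₀ (abs_nonneg t) h1
    have h3 : (0:ℝ) ≤ t ^ (k+2) := pow_nonneg ht'.1.le _
    have hx' : |x| < |η₀| + 1 := by
      have := abs_sub_abs_le_abs_sub x η₀
      rw [Metric.mem_ball, Real.dist_eq] at hx
      linarith
    have h4 : Real.exp (-x * t ^ 2) ≤ Real.exp (|η₀| + 1) := by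
      apply Real.exp_le_exp.2
      have ht2 : t ^ 2 ≤ 1 := by nlinarith [ht'.1, ht'.2]
      have h5 : -x * t ^ 2 ≤ |x| * t ^ 2 := by nlinarith [neg_abs_le x, sq_nonneg t]
      have h6 : |x| * t ^ 2 ≤ |x| := by nlinarith [abs_nonneg x]
      linarith
    rw [norm_neg, Real.norm_of_nonneg (by positivity)]
    calc t ^ (k+2) * Real.exp (-x * t ^ 2) ≤ 1 * Real.exp (-x * t ^ 2) := by
          exact mul_le_mul_of_nonneg_right h2 (Real.exp_pos _).le
      _ ≤ Real.exp (|η₀| + 1) := by rw [one_mul]; exact h4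
  · refine Filter.Eventually.of_forall fun t _ x _ => ?_
    have h : HasDerivAt (fun x : ℝ => Real.exp (-x * t ^ 2)) (Real.exp (-x * t ^ 2) * (-1 * t ^ 2)) x :=
      (((hasDerivAt_id x).neg.mul_const (t ^ 2)).exp)
    have := h.const_mul (t ^ k)
    convert this using 1
    all_goals try rfl
    show -(t ^ (k + 2) * Real.exp (-x * t ^ 2)) = _
    rw [pow_add]; ring

lemma A_pos (η : ℝ) (k : ℕ) : 0 < A k η := by
  apply intervalIntegral.intervalIntegral_pos_of_pos_on
    ((contA k η).intervalIntegrable 0 1)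
  · intro x hx
    have : (0:ℝ) < x := hx.1
    positivity
  · norm_num

lemma A_zero_val (k : ℕ) : A k 0 = 1 / (k + 1) := by
  simp [A, integral_pow]

lemma A00 : A 0 0 = 1 := by rw [A_zero_val]; norm_num
lemma A20 : A 2 0 = 1/3 := by rw [A_zero_val]; norm_num
lemma A40 : A 4 0 = 1/5 := by rw [A_zero_val]; norm_num


/-- `B(η, α) = 3 e^{-η} / A₀(η) − (3 − 2η + 4η²/α)`. -/
noncomputable def B (η α : ℝ) : ℝ :=
  3 * Real.exp (-η) / A 0 η - (3 - 2 * η + 4 * η ^ 2 / α)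

noncomputable def B1 (α η : ℝ) : ℝ :=
  (3 * (Real.exp (-η) * -1) * A 0 η - 3 * Real.exp (-η) * -(A 2 η)) / (A 0 η) ^ 2
    - (-2 + 8 * η / α)

lemma hasDerivAt_B (α η : ℝ) : HasDerivAt (fun η => B η α) (B1 α η) η := by
  unfold B B1
  have hE : HasDerivAt (fun η : ℝ => Real.exp (-η)) (Real.exp (-η) * -1) η :=
    (hasDerivAt_id η).neg.exp
  have hq := (hE.const_mul 3).div (hasDerivAt_A 0 η) (A_pos η 0).ne'
  have h3 : HasDerivAt (fun η : ℝ => η ^ 2) (2 * η) η := by simpa using hasDerivAt_pow 2 η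
  have hp : HasDerivAt (fun η : ℝ => 3 - 2 * η + 4 * η ^ 2 / α) (-2 + 8 * η / α) η := by
    have := ((hasDerivAt_const η (3:ℝ)).sub ((hasDerivAt_id η).const_mul 2)).add
      ((h3.const_mul 4).div_const α)
    convert this using 1
    all_goals try rfl
    ring
  have := hq.sub hp
  convert this using 1
  all_goals try rfl

lemma hasDerivAt_B1 (α : ℝ) : HasDerivAt (B1 α) (16 / 15 - 8 / α) 0 := by
  unfold B1
  have hE : HasDerivAt (fun η : ℝ => Real.exp (-η)) (Real.exp (-(0:ℝ)) * -1) 0 :=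
    (hasDerivAt_id (0:ℝ)).neg.exp
  have hA0 := hasDerivAt_A 0 0
  have hA2 := hasDerivAt_A 2 0
  have hu1 := ((hE.mul_const (-1)).const_mul 3).mul hA0
  have hu2 := (hE.const_mul 3).mul hA2.neg
  have hN := hu1.sub hu2
  have hD := hA0.pow 2
  have hD0 : (A 0 0) ^ 2 ≠ 0 := pow_ne_zero _ (A_pos 0 0).ne'
  have hQ := hN.div hD hD0
  have hP : HasDerivAt (fun η : ℝ => -2 + 8 * η / α) (8 / α) 0 := by
    have := (((hasDerivAt_id (0:ℝ)).const_mul 8).div_const α).const_add (-2)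
    convert this using 1
    all_goals try rfl
    ring
  have := hQ.sub hP
  convert this using 1
  all_goals try rfl
  rw [A00, A20, A40]
  norm_num [A00, A20]


/-- For every `α > 0`, `B_ηη(0, α) = (16/(15α))(α − 15/2)`; in particular it is
positive for `α > 7.5`, zero for `α = 7.5`, and negative for `0 < α < 7.5`. -/
theorem stmt_8 (α : ℝ) (hα : 0 < α) :
    iteratedDeriv 2 (fun η : ℝ => B η α) 0 = 16 / (15 * α) * (α - 15 / 2) ∧
    (α > 7.5 → 0 < iteratedDeriv 2 (fun η : ℝ => B η α) 0) ∧
    (α = 7.5 → iteratedDeriv 2 (fun η : ℝ => B η α) 0 = 0) ∧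
    (α < 7.5 → iteratedDeriv 2 (fun η : ℝ => B η α) 0 < 0) := by
  have hd1 : deriv (fun η => B η α) = B1 α := funext fun η => (hasDerivAt_B α η).deriv
  have key : iteratedDeriv 2 (fun η : ℝ => B η α) 0 = 16 / 15 - 8 / α := by
    rw [iteratedDeriv_succ, iteratedDeriv_one, hd1, (hasDerivAt_B1 α).deriv]
  have key2 : iteratedDeriv 2 (fun η : ℝ => B η α) 0 = 16 / (15 * α) * (α - 15 / 2) := by
    rw [key]; field_simp; ring
  refine ⟨key2, ?_, ?_, ?_⟩
  · intro h
    rw [key, sub_pos, div_lt_div_iff₀ hα (by norm_num)]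
    norm_num at h ⊢
    linarith
  · intro h
    rw [key, h]; norm_num
  · intro h
    rw [key, sub_neg, div_lt_div_iff₀ (by norm_num) hα]
    norm_num at h ⊢
    linarith
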